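/- For a prime p, positive integers n, k, r with p^r > 2 and k ≠ p^r, there is no tuple (k_1,...,k_n) of nonnegative integers with k_1+···+k_n = k, k_1+2k_2+···+n·k_n = n, and multinomial coefficient (k_1+···+k_n)!/(k_1!···k_n!) equal to p^r. -/

import Mathlib

/-- For `2 ≤ a` and `a + 2 ≤ k`, we have `k < k.choose a`. -/
lemma aux_lt_choose : ∀ k a : ℕ, 2 ≤ a → a + 2 ≤ k → k < k.choose a := by
  intro k
  induction k with
  | zero => intro a _ hk; omega
  | succ m ih =>
    intro a h2 hk
    obtain ⟨b, rfl⟩ : ∃ b, a = b + 1 := ⟨a - 1, by omega⟩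
    rw [Nat.choose_succ_succ]
    have hb1 : 1 ≤ b := by omega
    have h1 : m ≤ m.choose b := by
      rcases eq_or_lt_of_le hb1 with h | h
      · rw [← h, Nat.choose_one_right]
      · exact le_of_lt (ih b (by omega) (by omega))
    have h2' : m ≤ m.choose (b + 1) := by
      by_cases hc : b + 1 + 2 ≤ m
      · exact le_of_lt (ih (b + 1) (by omega) hc)
      · have hm : b + 1 = m - 1 := by omega
        have hm1 : 1 ≤ m := by omega
        rw [hm, Nat.choose_symm (by omega), Nat.choose_one_right]
    have hm3 : 3 ≤ m := by omega
    simp only [Nat.succ_eq_add_one]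
    omega

/-- For `1 ≤ a` and `a < k`, we have `k ≤ k.choose a`. -/
lemma aux_le_choose (k a : ℕ) (h1 : 1 ≤ a) (h2 : a < k) : k ≤ k.choose a := by
  rcases eq_or_lt_of_le h1 with h | h
  · rw [← h, Nat.choose_one_right]
  · by_cases hc : a + 2 ≤ k
    · exact le_of_lt (aux_lt_choose k a (by omega) hc)
    · have ha : a = k - 1 := by omega
      rw [ha, Nat.choose_symm (by omega), Nat.choose_one_right]

lemma aux_multinomial_eq_one {ι : Type*} (s : Finset ι) (f : ι → ℕ)
    (h : (∑ i ∈ s, f i) = 0) : Nat.multinomial s f = 1 := by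
  have hs := Nat.multinomial_spec s f
  rw [h, Nat.factorial_zero] at hs
  exact Nat.eq_one_of_mul_eq_one_left hs

lemma key_lemma {ι : Type*} [DecidableEq ι] (p : ℕ) (hp : p.Prime) :
    ∀ k : ℕ, ∀ (s : Finset ι) (f : ι → ℕ) (t : ℕ), 0 < t →
      (∑ i ∈ s, f i) = k → Nat.multinomial s f = p ^ t → k = p ^ t := by
  intro k
  induction k using Nat.strong_induction_on with
  | _ k ih =>
  intro s f t ht hsum hmul
  have hpt2 : 2 ≤ p ^ t := (Nat.one_lt_pow (by omega) hp.one_lt)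
  rcases Nat.eq_zero_or_pos k with rfl | hk
  · rw [aux_multinomial_eq_one s f hsum] at hmul; omega
  -- there is a nonzero entry with minimal value
  have hT : (s.filter fun i => f i ≠ 0).Nonempty := by
    by_contra h
    rw [Finset.not_nonempty_iff_eq_empty] at h
    have : ∑ i ∈ s, f i = 0 := by
      refine Finset.sum_eq_zero fun i hi => ?_
      by_contra hfi
      have hmem : i ∈ s.filter (fun i => f i ≠ 0) := Finset.mem_filter.mpr ⟨hi, hfi⟩
      rw [h] at hmem
      exact absurd hmem (Finset.notMem_empty i)
    omega
  obtain ⟨j, hjT, hjmin⟩ := Finset.exists_min_image _ f hT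
  obtain ⟨hjs, hfj⟩ := Finset.mem_filter.mp hjT
  have ha1 : 1 ≤ f j := Nat.pos_of_ne_zero hfj
  have hins : s = insert j (s.erase j) := (Finset.insert_erase hjs).symm
  have hsum' : f j + ∑ i ∈ s.erase j, f i = k := by
    rw [Finset.add_sum_erase s f hjs]; exact hsum
  have hdecomp : p ^ t = k.choose (f j) * Nat.multinomial (s.erase j) f := by
    rw [← hmul, hins, Nat.multinomial_insert (Finset.notMem_erase j s), hsum',
      ← hins]
  by_cases hz : ∑ i ∈ s.erase j, f i = 0
  · -- only one nonzero entry: multinomial is 1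
    have hfj' : f j = k := by omega
    rw [aux_multinomial_eq_one _ _ hz, hfj', Nat.choose_self] at hdecomp
    omega
  · -- at least two nonzero entries
    obtain ⟨i, hie, hfi⟩ := Finset.exists_ne_zero_of_sum_ne_zero hz
    have his : i ∈ s := Finset.mem_of_mem_erase hie
    have hfij : f j ≤ f i := hjmin i (Finset.mem_filter.mpr ⟨his, hfi⟩)
    have hile : f i ≤ ∑ x ∈ s.erase j, f x :=
      Finset.single_le_sum (fun x _ => Nat.zero_le (f x)) hie
    have h2a : 2 * f j ≤ k := by omega
    have hdvd : k.choose (f j) ∣ p ^ t := ⟨_, hdecomp⟩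
    obtain ⟨u, hu, hcu⟩ := (Nat.dvd_prime_pow hp).mp hdvd
    have hlow : k ≤ k.choose (f j) := aux_le_choose k (f j) ha1 (by omega)
    have hkummer : p ^ ((k.choose (f j)).factorization p) ≤ k :=
      Nat.pow_factorization_choose_le hk
    have hfac : (k.choose (f j)).factorization p = u := by
      rw [hcu, hp.factorization_pow, Finsupp.single_eq_same]
    rw [hfac, ← hcu] at hkummer
    have hck : k.choose (f j) = k := le_antisymm hkummer hlow
    have haone : f j = 1 := by
      by_contra h1
      have := aux_lt_choose k (f j) (by omega) (by omega)
      omega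
    have hkp : k = p ^ u := by rw [← hck, hcu]
    have hu1 : 1 ≤ u := by
      rcases Nat.eq_zero_or_pos u with rfl | h; · simp at hkp; omega
      · exact h
    -- remaining multinomial is p ^ (t - u)
    have hM2 : Nat.multinomial (s.erase j) f = p ^ (t - u) := by
      have hpos : 0 < p ^ u := Nat.pow_pos (n := u) hp.pos
      have : p ^ u * p ^ (t - u) = p ^ u * Nat.multinomial (s.erase j) f := by
        rw [← pow_add, Nat.add_sub_cancel' hu, hdecomp, hck, hkp]
      exact (Nat.eq_of_mul_eq_mul_left hpos this).symm
    rcases Nat.lt_or_ge u t with hut | hut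
    · -- u < t: recurse, get contradiction
      have hrec : ∑ i ∈ s.erase j, f i = k - 1 := by omega
      have hk1 : k - 1 < k := by omega
      have := ih (k - 1) hk1 (s.erase j) f (t - u) (by omega) hrec hM2
      have hdk : p ∣ k := hkp ▸ dvd_pow_self p (by omega)
      have hdk1 : p ∣ k - 1 := this ▸ dvd_pow_self p (by omega)
      have hp1 : p ∣ 1 := (Nat.sub_sub_self (by omega : 1 ≤ k)) ▸ Nat.dvd_sub hdk hdk1
      have hle1 := Nat.le_of_dvd one_pos hp1
      have := hp.two_le
      omega
    · have : u = t := by omega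
      rw [hkp, this]

theorem no_tuple_when_k_ne_prime_pow (p n k r : ℕ) (hp : p.Prime)
    (hn : 0 < n) (hk : 0 < k) (hr : 0 < r) (hpr : 2 < p ^ r) (hne : k ≠ p ^ r) :
    ¬ ∃ f : Fin n → ℕ,
        (∑ i, f i) = k ∧ (∑ i : Fin n, (i.1 + 1) * f i) = n ∧
        (∑ i, f i).factorial / ∏ i, (f i).factorial = p ^ r := by
  rintro ⟨f, h1, -, h3⟩
  have hmul : Nat.multinomial Finset.univ f = p ^ r := h3
  exact hne (key_lemma p hp k Finset.univ f r hr h1 hmul)
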